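/- Let Y¹ and Y⁰ be independent random variables, each exponentially distributed with rate 1, let τ¹ be the honest random time on [s,t] associated with the intensity λ1 and driven by Y¹, and let τ⁰ be the honest random time on [s,t] associated with the intensity λ0 and driven by Y⁰. Then E[exp(-∫_{τ¹}^t λ0(u) du)] = P(τ⁰ ≤ τ¹). -/

import Mathlib

open MeasureTheory ProbabilityTheory Real

lemma expMeasure_Ici (a : ℝ) (ha : 0 ≤ a) :
    expMeasure 1 (Set.Ici a) = ENNReal.ofReal (Real.exp (-a)) := by
  have hP : IsProbabilityMeasure (expMeasure 1) := isProbabilityMeasure_expMeasure one_pos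
  have hac : expMeasure 1 ≪ volume := withDensity_absolutelyContinuous _ _
  have hsing : expMeasure 1 {a} = 0 := hac (volume_singleton)
  have hIic : expMeasure 1 (Set.Iic a) = ENNReal.ofReal (1 - Real.exp (-a)) := by
    have := lintegral_exponentialPDF_eq_antiDeriv one_pos a
    rw [if_pos ha, one_mul] at this
    rw [expMeasure, gammaMeasure, withDensity_apply _ measurableSet_Iic]
    exact this
  have hIio : expMeasure 1 (Set.Iio a) = ENNReal.ofReal (1 - Real.exp (-a)) := by
    have : Set.Iic a = Set.Iio a ∪ {a} := by
      ext x; simp [le_iff_lt_or_eq]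
    rw [this] at hIic
    rw [measure_union (by simp) (measurableSet_singleton a), hsing, add_zero] at hIic
    exact hIic
  have hcompl : expMeasure 1 (Set.Ici a) = 1 - expMeasure 1 (Set.Iio a) := by
    rw [← Set.compl_Iio, measure_compl measurableSet_Iio (measure_ne_top _ _), measure_univ]
  rw [hcompl, hIio]
  have h1 : ENNReal.ofReal (1 - Real.exp (-a)) + ENNReal.ofReal (Real.exp (-a)) = 1 := by
    rw [← ENNReal.ofReal_add (by simp [Real.exp_le_one_iff]; positivity) (Real.exp_pos _).le]
    norm_num
  rw [← h1]
  simp [ENNReal.add_sub_cancel_left, ENNReal.ofReal_ne_top]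

lemma expMeasure_neg : expMeasure 1 (Set.Iio 0) = 0 := by
  rw [expMeasure, gammaMeasure, withDensity_apply _ measurableSet_Iio]
  exact lintegral_gammaPDF_of_nonpos le_rfl


/-- The honest random time on `[s,t]` associated with the intensity `lam`,
driven by the value `y`: `max (s, inf {r ∈ [s,t] : ∫_r^t lam ≤ y})`. -/
noncomputable def honestTime (s t : ℝ) (lam : ℝ → ℝ) (y : ℝ) : ℝ :=
  max s (sInf {r | r ∈ Set.Icc s t ∧ ∫ u in r..t, lam u ≤ y})


section Aux
variable {s t : ℝ} {lam : ℝ → ℝ}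

lemma F_cont (hlam : Continuous lam) : Continuous (fun r => ∫ u in r..t, lam u) := by
  have h : Continuous (fun r => ∫ u in t..r, lam u) :=
    intervalIntegral.continuous_primitive (fun a b => hlam.intervalIntegrable a b) t
  have := h.neg
  convert this using 1
  funext r
  rw [intervalIntegral.integral_symm]
  rfl

lemma F_nonneg (hnn : ∀ u ∈ Set.Icc s t, 0 ≤ lam u) {r : ℝ} (hr : r ∈ Set.Icc s t) :
    0 ≤ ∫ u in r..t, lam u := by
  apply intervalIntegral.integral_nonneg hr.2
  intro u hu
  exact hnn u ⟨hr.1.trans hu.1, hu.2⟩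

lemma F_antitone (hlam : Continuous lam) (hnn : ∀ u ∈ Set.Icc s t, 0 ≤ lam u)
    {a b : ℝ} (ha : a ∈ Set.Icc s t) (hb : b ∈ Set.Icc s t) (hab : a ≤ b) :
    (∫ u in b..t, lam u) ≤ ∫ u in a..t, lam u := by
  have hsplit : (∫ u in a..b, lam u) + (∫ u in b..t, lam u) = ∫ u in a..t, lam u :=
    intervalIntegral.integral_add_adjacent_intervals (hlam.intervalIntegrable a b)
      (hlam.intervalIntegrable b t)
  have hpos : 0 ≤ ∫ u in a..b, lam u := by
    apply intervalIntegral.integral_nonneg hab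
    intro u hu
    exact hnn u ⟨ha.1.trans hu.1, hu.2.trans hb.2⟩
  linarith

lemma S_closed (hlam : Continuous lam) (y : ℝ) :
    IsClosed {r | r ∈ Set.Icc s t ∧ ∫ u in r..t, lam u ≤ y} := by
  have : {r | r ∈ Set.Icc s t ∧ ∫ u in r..t, lam u ≤ y}
      = Set.Icc s t ∩ (fun r => ∫ u in r..t, lam u) ⁻¹' Set.Iic y := rfl
  rw [this]
  exact isClosed_Icc.inter (isClosed_Iic.preimage (F_cont hlam))

lemma S_bddBelow (y : ℝ) :
    BddBelow {r | r ∈ Set.Icc s t ∧ ∫ u in r..t, lam u ≤ y} :=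
  ⟨s, fun r hr => hr.1.1⟩

lemma S_nonempty (hst : s ≤ t) {y : ℝ} (hy : 0 ≤ y) :
    {r | r ∈ Set.Icc s t ∧ ∫ u in r..t, lam u ≤ y}.Nonempty :=
  ⟨t, ⟨hst, le_rfl⟩, by simp [hy]⟩

lemma honestTime_mem_S (hlam : Continuous lam) (hst : s ≤ t) {y : ℝ} (hy : 0 ≤ y) :
    honestTime s t lam y ∈ {r | r ∈ Set.Icc s t ∧ ∫ u in r..t, lam u ≤ y} := by
  have hmem := (S_closed hlam y).csInf_mem (S_nonempty hst hy) (S_bddBelow y)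
  have hge : s ≤ sInf {r | r ∈ Set.Icc s t ∧ ∫ u in r..t, lam u ≤ y} :=
    le_csInf (S_nonempty hst hy) (fun r hr => hr.1.1)
  rw [honestTime, max_eq_right hge]
  exact hmem

lemma honestTime_mem_Icc (hlam : Continuous lam) (hs : 0 ≤ s) (hst : s ≤ t) (y : ℝ) :
    honestTime s t lam y ∈ Set.Icc s t := by
  rcases Set.eq_empty_or_nonempty {r | r ∈ Set.Icc s t ∧ ∫ u in r..t, lam u ≤ y} with h | h
  · rw [honestTime, h, Real.sInf_empty, max_eq_left hs]
    exact ⟨le_rfl, hst⟩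
  · have hmem := (S_closed hlam y).csInf_mem h (S_bddBelow y)
    have hge : s ≤ sInf {r | r ∈ Set.Icc s t ∧ ∫ u in r..t, lam u ≤ y} :=
      le_csInf h (fun r hr => hr.1.1)
    rw [honestTime, max_eq_right hge]
    exact hmem.1

lemma honestTime_le_iff (hlam : Continuous lam) (hnn : ∀ u ∈ Set.Icc s t, 0 ≤ lam u)
    (hst : s ≤ t) {y x : ℝ} (hy : 0 ≤ y) (hx : x ∈ Set.Icc s t) :
    honestTime s t lam y ≤ x ↔ (∫ u in x..t, lam u) ≤ y := by
  constructor
  · intro h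
    have hmem := honestTime_mem_S hlam hst hy (lam := lam)
    exact le_trans (F_antitone hlam hnn hmem.1 hx h) hmem.2
  · intro h
    have hle : sInf {r | r ∈ Set.Icc s t ∧ ∫ u in r..t, lam u ≤ y} ≤ x :=
      csInf_le (S_bddBelow y) ⟨hx, h⟩
    rw [honestTime]
    exact max_le hx.1 hle

lemma honestTime_antitone_on (hst : s ≤ t) {a b : ℝ} (ha : 0 ≤ a) (hab : a ≤ b) :
    honestTime s t lam b ≤ honestTime s t lam a := by
  have hsub : {r | r ∈ Set.Icc s t ∧ ∫ u in r..t, lam u ≤ a}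
      ⊆ {r | r ∈ Set.Icc s t ∧ ∫ u in r..t, lam u ≤ b} :=
    fun r hr => ⟨hr.1, hr.2.trans hab⟩
  have := csInf_le_csInf (S_bddBelow b) (S_nonempty hst ha) hsub
  exact max_le_max le_rfl this

lemma honestTime_of_neg (hs : 0 ≤ s) (hnn : ∀ u ∈ Set.Icc s t, 0 ≤ lam u)
    {y : ℝ} (hy : y < 0) : honestTime s t lam y = s := by
  have hempty : {r | r ∈ Set.Icc s t ∧ ∫ u in r..t, lam u ≤ y} = ∅ := by
    ext r
    simp only [Set.mem_setOf_eq, Set.mem_empty_iff_false, iff_false, not_and, not_le]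
    intro hr
    exact lt_of_lt_of_le hy (F_nonneg hnn hr)
  rw [honestTime, hempty, Real.sInf_empty, max_eq_left hs]

lemma honestTime_measurable (hs : 0 ≤ s) (hst : s ≤ t) (hlam : Continuous lam)
    (hnn : ∀ u ∈ Set.Icc s t, 0 ≤ lam u) : Measurable (honestTime s t lam) := by
  have heq : honestTime s t lam = fun y => if y < 0 then s else honestTime s t lam (max y 0) := by
    funext y
    by_cases hy : y < 0
    · rw [if_pos hy, honestTime_of_neg hs hnn hy]
    · rw [if_neg hy, max_eq_left (not_lt.mp hy)]
  rw [heq]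
  have hanti : Antitone (fun y => honestTime s t lam (max y 0)) := by
    intro a b hab
    exact honestTime_antitone_on hst (le_max_right a 0) (max_le_max hab le_rfl)
  exact Measurable.ite (measurableSet_lt measurable_id measurable_const) measurable_const
    hanti.measurable

end Aux

/-- With `τ¹`, `τ⁰` the honest times on `[s,t]` associated with `λ₁`, `λ₀` and driven
by independent `Exp(1)` random variables `Y¹`, `Y⁰`,
`E[exp (-∫_{τ¹}^t λ₀(u) du)] = P(τ⁰ ≤ τ¹)`. -/
theorem expectation_eq_prob_le
    {Ω : Type*} [MeasurableSpace Ω] (P : Measure Ω) [IsProbabilityMeasure P]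
    (s t : ℝ) (hs : 0 ≤ s) (hst : s < t)
    (lam0 lam1 : ℝ → ℝ) (hlam0 : Continuous lam0) (hlam1 : Continuous lam1)
    (hlam0_nonneg : ∀ u ∈ Set.Icc s t, 0 ≤ lam0 u)
    (hlam1_nonneg : ∀ u ∈ Set.Icc s t, 0 ≤ lam1 u)
    (Y1 Y0 : Ω → ℝ) (hY1 : Measurable Y1) (hY0 : Measurable Y0)
    (hY1law : P.map Y1 = expMeasure 1) (hY0law : P.map Y0 = expMeasure 1)
    (hindep : IndepFun Y1 Y0 P) :
    (∫ ω, Real.exp (-(∫ u in (honestTime s t lam1 (Y1 ω))..t, lam0 u)) ∂P)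
      = (P {ω | honestTime s t lam0 (Y0 ω) ≤ honestTime s t lam1 (Y1 ω)}).toReal := by
  have hPμ : IsProbabilityMeasure (expMeasure 1) := isProbabilityMeasure_expMeasure one_pos
  have hτ1meas : Measurable (honestTime s t lam1) :=
    honestTime_measurable hs hst.le hlam1 hlam1_nonneg
  set G : ℝ → ℝ := fun y => ∫ u in (honestTime s t lam1 y)..t, lam0 u with hGdef
  have hGmeas : Measurable G := (F_cont hlam0).measurable.comp hτ1meas
  have hGnonneg : ∀ y, 0 ≤ G y := fun y =>
    F_nonneg hlam0_nonneg (honestTime_mem_Icc hlam1 hs hst.le y)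
  have hExpMeas : Measurable fun y => Real.exp (-(G y)) := measurable_exp.comp hGmeas.neg
  -- LHS
  have hLHS : (∫ ω, Real.exp (-(∫ u in (honestTime s t lam1 (Y1 ω))..t, lam0 u)) ∂P)
      = (∫⁻ y, ENNReal.ofReal (Real.exp (-(G y))) ∂(expMeasure 1)).toReal := by
    have h1 : (∫ ω, Real.exp (-(G (Y1 ω))) ∂P) = ∫ y, Real.exp (-(G y)) ∂(expMeasure 1) := by
      rw [← hY1law, integral_map hY1.aemeasurable hExpMeas.aestronglyMeasurable]
    calc (∫ ω, Real.exp (-(∫ u in (honestTime s t lam1 (Y1 ω))..t, lam0 u)) ∂P)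
        = ∫ y, Real.exp (-(G y)) ∂(expMeasure 1) := h1
      _ = (∫⁻ y, ENNReal.ofReal (Real.exp (-(G y))) ∂(expMeasure 1)).toReal :=
        integral_eq_lintegral_of_nonneg_ae (ae_of_all _ fun y => (Real.exp_pos _).le)
          hExpMeas.aestronglyMeasurable
  -- RHS
  have hY0nonneg : ∀ᵐ ω ∂P, 0 ≤ Y0 ω := by
    have h0 : P (Y0 ⁻¹' Set.Iio 0) = 0 := by
      rw [← Measure.map_apply hY0 measurableSet_Iio, hY0law]
      exact expMeasure_neg
    rw [ae_iff]
    simpa [not_le] using (show P {a | Y0 a < 0} = 0 from h0)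
  have hsetae : {ω | honestTime s t lam0 (Y0 ω) ≤ honestTime s t lam1 (Y1 ω)}
      =ᵐ[P] {ω | G (Y1 ω) ≤ Y0 ω} := by
    apply Filter.eventuallyEq_set.mpr
    filter_upwards [hY0nonneg] with ω hω
    exact honestTime_le_iff hlam0 hlam0_nonneg hst.le hω
      (honestTime_mem_Icc hlam1 hs hst.le (Y1 ω))
  have hms : MeasurableSet {p : ℝ × ℝ | G p.1 ≤ p.2} :=
    measurableSet_le (hGmeas.comp measurable_fst) measurable_snd
  have hjoint : P.map (fun ω => (Y1 ω, Y0 ω)) = (expMeasure 1).prod (expMeasure 1) := by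
    rw [(indepFun_iff_map_prod_eq_prod_map_map hY1.aemeasurable hY0.aemeasurable).mp hindep,
      hY1law, hY0law]
  have hRHS : P {ω | honestTime s t lam0 (Y0 ω) ≤ honestTime s t lam1 (Y1 ω)}
      = ∫⁻ y, ENNReal.ofReal (Real.exp (-(G y))) ∂(expMeasure 1) := by
    rw [measure_congr hsetae]
    have hpre : {ω | G (Y1 ω) ≤ Y0 ω} = (fun ω => (Y1 ω, Y0 ω)) ⁻¹' {p : ℝ × ℝ | G p.1 ≤ p.2} :=
      rfl
    rw [hpre, ← Measure.map_apply (hY1.prodMk hY0) hms, hjoint, Measure.prod_apply hms]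
    apply lintegral_congr
    intro y
    have : Prod.mk y ⁻¹' {p : ℝ × ℝ | G p.1 ≤ p.2} = Set.Ici (G y) := by
      ext z; simp [Set.mem_Ici]
    rw [this, expMeasure_Ici _ (hGnonneg y)]
  rw [hLHS, hRHS]
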